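/- arXiv:2108.10756 — 3 statements merged into one kernel-verified Lean document; each statement's English description precedes it below -/
import Mathlib

section
/- For every integer n ≥ 1, y(n-1,2) + y(n,2) = (1/2) · Σ_{j=0}^{n} E_j · S₁(n,j) / (n+1)!. -/
def S1 : ℕ → ℕ → ℤ
  | 0, 0 => 1
  | 0, _ + 1 => 0
  | n + 1, 0 => -(n : ℤ) * S1 n 0
  | n + 1, k + 1 => S1 n k - (n : ℤ) * S1 n (k + 1)

/-- Stirling numbers of the second kind. -/
def S2 : ℕ → ℕ → ℤ
  | 0, 0 => 1
  | 0, _ + 1 => 0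
  | _ + 1, 0 => 0
  | n + 1, k + 1 => (k + 1 : ℤ) * S2 n (k + 1) + S2 n k

lemma S1_eq_zero_of_lt : ∀ n k, n < k → S1 n k = 0 := by
  intro n
  induction n with
  | zero => intro k hk; match k, hk with | k+1, _ => rfl
  | succ n ih =>
    intro k hk
    match k, hk with
    | k+1, hk =>
      have h1 : n < k := by omega
      rw [S1, ih k h1, ih (k+1) (by omega)]
      ring

lemma S2_eq_zero_of_lt : ∀ n k, n < k → S2 n k = 0 := by
  intro n
  induction n with
  | zero => intro k hk; match k, hk with | k+1, _ => rfl
  | succ n ih =>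
    intro k hk
    match k, hk with
    | k+1, hk =>
      rw [S2, ih k (by omega), ih (k+1) (by omega)]
      ring

lemma S1_succ_zero : ∀ n, S1 (n+1) 0 = 0 := by
  intro n
  induction n with
  | zero => rfl
  | succ n ih => rw [S1, ih]; ring

open Finset in
lemma orth (n : ℕ) : ∀ i, ∑ k ∈ range (n+1), S1 n k * S2 k i = if n = i then 1 else 0 := by
  induction n with
  | zero =>
    intro i
    rw [Finset.sum_range_one]
    match i with
    | 0 => rfl
    | i+1 => simp [S1, S2]
  | succ n ih =>
    intro i
    rw [Finset.sum_range_succ']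
    have key : ∀ k, S1 (n+1) (k+1) = S1 n k - (n:ℤ) * S1 n (k+1) := fun k => rfl
    simp only [key]
    have split : ∑ k ∈ range (n+1), (S1 n k - (n:ℤ) * S1 n (k+1)) * S2 (k+1) i
        = ∑ k ∈ range (n+1), S1 n k * S2 (k+1) i
          - (n:ℤ) * ∑ k ∈ range (n+1), S1 n (k+1) * S2 (k+1) i := by
      rw [Finset.mul_sum, ← Finset.sum_sub_distrib]; apply Finset.sum_congr rfl; intros; ring
    rw [split]
    have hshift : ∑ k ∈ range (n+1), S1 n (k+1) * S2 (k+1) i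
        = (if n = i then 1 else 0) - S1 n 0 * S2 0 i := by
      have : ∑ k ∈ range (n+2), S1 n k * S2 k i
          = ∑ k ∈ range (n+1), S1 n (k+1) * S2 (k+1) i + S1 n 0 * S2 0 i := by
        rw [Finset.sum_range_succ']
      rw [Finset.sum_range_succ, ih i, S1_eq_zero_of_lt n (n+1) (by omega)] at this
      simp at this
      omega
    rw [hshift]
    have hz0 : S1 (n+1) 0 = -(n:ℤ) * S1 n 0 := rfl
    rw [hz0]
    match i with
    | 0 =>
      have : ∀ k, S2 (k+1) 0 = 0 := fun k => rfl
      simp only [this, mul_zero, Finset.sum_const_zero]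
      have h0 : S2 0 0 = (1:ℤ) := rfl
      rw [h0]
      rcases Nat.eq_zero_or_pos n with h | h
      · subst h; simp
      · obtain ⟨m, rfl⟩ := Nat.exists_eq_succ_of_ne_zero (by omega : n ≠ 0)
        rw [if_neg (by omega), if_neg (by omega), S1_succ_zero m]
        push_cast; ring
    | j+1 =>
      have hS2 : ∀ k, S2 (k+1) (j+1) = (j+1:ℤ) * S2 k (j+1) + S2 k j := fun k => rfl
      have expand : ∑ k ∈ range (n+1), S1 n k * S2 (k+1) (j+1)
          = (j+1:ℤ) * ∑ k ∈ range (n+1), S1 n k * S2 k (j+1)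
            + ∑ k ∈ range (n+1), S1 n k * S2 k j := by
        rw [Finset.mul_sum, ← Finset.sum_add_distrib]
        apply Finset.sum_congr rfl; intro k _; rw [hS2]; ring
      rw [expand, ih (j+1), ih j]
      have hS2z : S2 0 (j+1) = 0 := rfl
      rw [hS2z]
      by_cases h1 : n = j
      · subst h1
        rw [if_neg (by omega), if_pos rfl, if_pos rfl]
        ring
      · by_cases h2 : n = j+1
        · subst h2
          rw [if_pos rfl, if_neg (by omega), if_neg (by omega)]
          push_cast; ring
        · rw [if_neg h1, if_neg h2, if_neg (by omega)]
          ring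
open Finset in
lemma choose_S2 (m : ℕ) : ∀ i, ∑ k ∈ range (m+1), (m.choose k : ℤ) * S2 k i = S2 (m+1) (i+1) := by
  induction m with
  | zero =>
    intro i
    rw [Finset.sum_range_one]
    have : S2 1 (i+1) = (i+1:ℤ) * S2 0 (i+1) + S2 0 i := rfl
    rw [this, S2_eq_zero_of_lt 0 (i+1) (by omega)]
    simp
  | succ m ih =>
    intro i
    rw [Finset.sum_range_succ']
    have hsplit : ∀ k, ((m+1).choose (k+1) : ℤ) = (m.choose k : ℤ) + (m.choose (k+1) : ℤ) := by
      intro k; rw [Nat.choose_succ_succ]; push_cast; ring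
    have step1 : ∑ k ∈ range (m+1), ((m+1).choose (k+1) : ℤ) * S2 (k+1) i
        = ∑ k ∈ range (m+1), (m.choose k : ℤ) * S2 (k+1) i
          + ∑ k ∈ range (m+1), (m.choose (k+1) : ℤ) * S2 (k+1) i := by
      rw [← Finset.sum_add_distrib]
      apply Finset.sum_congr rfl; intro k _; rw [hsplit]; ring
    rw [step1]
    have hshift : ∑ k ∈ range (m+1), (m.choose (k+1) : ℤ) * S2 (k+1) i
        = S2 (m+1) (i+1) - S2 0 i := by
      have h2 : ∑ k ∈ range (m+2), (m.choose k : ℤ) * S2 k i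
          = ∑ k ∈ range (m+1), (m.choose (k+1) : ℤ) * S2 (k+1) i + (m.choose 0 : ℤ) * S2 0 i := by
        rw [Finset.sum_range_succ']
      rw [Finset.sum_range_succ, ih i, Nat.choose_succ_self] at h2
      simp [Nat.choose_zero_right] at h2
      omega
    rw [hshift]
    match i with
    | 0 =>
      have : ∀ k, S2 (k+1) 0 = 0 := fun k => rfl
      simp only [this, mul_zero, Finset.sum_const_zero]
      have e1 : S2 (m+2) 1 = (1:ℤ) * S2 (m+1) 1 + S2 (m+1) 0 := rfl
      have e2 : S2 (m+1) 0 = 0 := rfl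
      rw [e1, e2]
      simp
    | j+1 =>
      have hS2 : ∀ k, S2 (k+1) (j+1) = (j+1:ℤ) * S2 k (j+1) + S2 k j := fun k => rfl
      have expand : ∑ k ∈ range (m+1), (m.choose k : ℤ) * S2 (k+1) (j+1)
          = (j+1:ℤ) * ∑ k ∈ range (m+1), (m.choose k : ℤ) * S2 k (j+1)
            + ∑ k ∈ range (m+1), (m.choose k : ℤ) * S2 k j := by
        rw [Finset.mul_sum, ← Finset.sum_add_distrib]
        apply Finset.sum_congr rfl; intro k _; rw [hS2]; ring
      rw [expand, ih (j+1), ih j]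
      have e1 : S2 (m+2) (j+2) = (j+2:ℤ) * S2 (m+1) (j+2) + S2 (m+1) (j+1) := rfl
      have e2 : S2 0 (j+1) = 0 := rfl
      rw [e1, e2]
      push_cast
      ring

/-- The candidate Euler numbers. -/
noncomputable def A (m : ℕ) : ℚ := ∑ i ∈ Finset.range (m+1), (-1/2:ℚ)^i * (i.factorial : ℚ) * (S2 m i : ℚ)

open Finset in
lemma A_rec (m : ℕ) : ∑ k ∈ range (m+1), (m.choose k : ℚ) * A k = (if m = 0 then 2 else 0) - A m := by
  -- extend inner sums and swap
  have hA : ∀ k ∈ range (m+1), (m.choose k : ℚ) * A k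
      = ∑ i ∈ range (m+1), (m.choose k : ℚ) * ((-1/2:ℚ)^i * (i.factorial : ℚ) * (S2 k i : ℚ)) := by
    intro k hk
    rw [A, Finset.mul_sum]
    apply Finset.sum_subset
    · intro x hx
      simp only [Finset.mem_range] at *
      omega
    · intro x hx hx2
      simp only [Finset.mem_range] at *
      rw [S2_eq_zero_of_lt k x (by omega)]
      simp
  rw [Finset.sum_congr rfl hA, Finset.sum_comm]
  have hswap : ∀ i ∈ range (m+1),
      ∑ k ∈ range (m+1), (m.choose k : ℚ) * ((-1/2:ℚ)^i * (i.factorial : ℚ) * (S2 k i : ℚ))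
      = (-1/2:ℚ)^i * (i.factorial : ℚ) * (S2 (m+1) (i+1) : ℚ) := by
    intro i _
    have := choose_S2 m i
    have hcast : ((∑ k ∈ range (m+1), (m.choose k : ℤ) * S2 k i : ℤ) : ℚ) = ((S2 (m+1) (i+1) : ℤ) : ℚ) := by
      exact_mod_cast congrArg (fun x : ℤ => (x : ℚ)) this
    push_cast at hcast
    rw [← hcast, Finset.mul_sum]
    apply Finset.sum_congr rfl
    intro k _
    ring
  rw [Finset.sum_congr rfl hswap]
  -- now use S2 recurrence
  have hrec : ∀ i, ((S2 (m+1) (i+1) : ℤ) : ℚ) = (i+1:ℚ) * (S2 m (i+1) : ℚ) + (S2 m i : ℚ) := by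
    intro i
    have : S2 (m+1) (i+1) = (i+1:ℤ) * S2 m (i+1) + S2 m i := rfl
    exact_mod_cast congrArg (fun x : ℤ => (x : ℚ)) this
  have expand : ∑ i ∈ range (m+1), (-1/2:ℚ)^i * (i.factorial : ℚ) * (S2 (m+1) (i+1) : ℚ)
      = ∑ i ∈ range (m+1), (-1/2:ℚ)^i * (i.factorial : ℚ) * ((i+1:ℚ) * (S2 m (i+1) : ℚ))
        + A m := by
    rw [A, ← Finset.sum_add_distrib]
    apply Finset.sum_congr rfl
    intro i _
    rw [hrec i]
    ring
  rw [expand]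
  -- reindex the shifted sum
  have termwise : ∀ i : ℕ, (-1/2:ℚ)^i * (i.factorial : ℚ) * ((i+1:ℚ) * (S2 m (i+1) : ℚ))
      = (-2:ℚ) * ((-1/2:ℚ)^(i+1) * ((i+1).factorial : ℚ) * (S2 m (i+1) : ℚ)) := by
    intro i
    rw [Nat.factorial_succ]
    push_cast
    ring
  rw [Finset.sum_congr rfl (fun i _ => termwise i)]
  have hre : ∑ i ∈ range (m+1), (-2:ℚ) * ((-1/2:ℚ)^(i+1) * ((i+1).factorial : ℚ) * (S2 m (i+1) : ℚ))
      = ∑ i ∈ range (m+2), (-2:ℚ) * ((-1/2:ℚ)^i * (i.factorial : ℚ) * (S2 m i : ℚ))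
        - (-2:ℚ) * ((-1/2:ℚ)^0 * ((0:ℕ).factorial : ℚ) * (S2 m 0 : ℚ)) := by
    rw [Finset.sum_range_succ' (fun i => (-2:ℚ) * ((-1/2:ℚ)^i * (i.factorial : ℚ) * (S2 m i : ℚ))) (m+1)]
    ring
  rw [hre, Finset.sum_range_succ, S2_eq_zero_of_lt m (m+1) (by omega)]
  have hAm : ∑ i ∈ range (m+1), (-2:ℚ) * ((-1/2:ℚ)^i * (i.factorial : ℚ) * (S2 m i : ℚ)) = -2 * A m := by
    rw [A, Finset.mul_sum]
  rw [hAm]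
  have hS2m0 : (S2 m 0 : ℚ) = if m = 0 then 1 else 0 := by
    match m with
    | 0 => simp [S2]
    | m+1 => have : S2 (m+1) 0 = 0 := rfl; rw [this]; simp
  rw [hS2m0]
  by_cases h : m = 0 <;> simp [h] <;> ring

open Finset

noncomputable def Gp (p : ℕ) : Polynomial ℚ :=
  Polynomial.C ((p+1:ℚ)⁻¹) * (Polynomial.bernoulli (p+1) - Polynomial.C (bernoulli (p+1)))

lemma Gp_eval (p n : ℕ) : (Gp p).eval (n:ℚ) = ∑ k ∈ range n, (k:ℚ)^p := by
  have h := Polynomial.bernoulli_succ_eval n p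
  rw [Gp]
  simp only [Polynomial.eval_mul, Polynomial.eval_C, Polynomial.eval_sub]
  rw [Nat.succ_eq_add_one] at h
  rw [h]
  have hp : (p+1:ℚ) ≠ 0 := by positivity
  field_simp
  ring

lemma coeff_one_comp (q : Polynomial ℚ) (a : ℚ) :
    (q.comp (Polynomial.C a * Polynomial.X)).coeff 1 = a * q.coeff 1 := by
  have h1 : ∀ r : Polynomial ℚ, r.coeff 1 = (Polynomial.derivative r).eval 0 := by
    intro r
    rw [← Polynomial.coeff_zero_eq_eval_zero, Polynomial.coeff_derivative]
    simp
  rw [h1, Polynomial.derivative_comp]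
  simp [h1]

lemma coeff_one_bernoulli (m : ℕ) :
    (Polynomial.bernoulli (m+1)).coeff 1 = ((m:ℚ)+1) * bernoulli m := by
  rw [Polynomial.bernoulli_def, Polynomial.finset_sum_coeff, Finset.sum_eq_single 1]
  · rw [Polynomial.coeff_monomial, if_pos rfl]
    simp only [Nat.add_sub_cancel, Nat.choose_one_right]
    push_cast
    ring
  · intro b _ hb1
    rw [Polynomial.coeff_monomial, if_neg hb1]
  · intro h
    simp at h

lemma coeff_one_Gp (p : ℕ) : (Gp p).coeff 1 = bernoulli p := by
  rw [Gp, Polynomial.coeff_C_mul, Polynomial.coeff_sub, Polynomial.coeff_C,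
    if_neg (by norm_num), coeff_one_bernoulli]
  have hp : (p+1:ℚ) ≠ 0 := by positivity
  field_simp
  ring

lemma sum_split (p n : ℕ) : ∑ k ∈ range (2*n), (k:ℚ)^p
    = ∑ k ∈ range n, ((2*k:ℕ):ℚ)^p + ∑ k ∈ range n, ((2*k+1:ℕ):ℚ)^p := by
  induction n with
  | zero => simp
  | succ n ih =>
    have : 2*(n+1) = (2*n+1)+1 := by ring
    rw [this, Finset.sum_range_succ, Finset.sum_range_succ, Finset.sum_range_succ,
      Finset.sum_range_succ, ih]
    push_cast
    ring

/-- The Bernoulli "multiplication theorem" value: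
`∑_{j=0}^{p} C(p,j)·2^j·B_j = (2-2^p)·B_p`. -/
lemma bernoulli_two_mul (p : ℕ) :
    ∑ j ∈ range (p+1), (p.choose j : ℚ) * 2^j * bernoulli j = (2 - 2^p) * bernoulli p := by
  set L : Polynomial ℚ := (Gp p).comp (Polynomial.C 2 * Polynomial.X)
      - Polynomial.C ((2:ℚ)^p) * Gp p with hL
  set R : Polynomial ℚ := ∑ j ∈ range (p+1),
      Polynomial.C ((p.choose j : ℚ) * 2^j) * Gp j with hR
  have heval : ∀ n : ℕ, L.eval (n:ℚ) = R.eval (n:ℚ) := by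
    intro n
    have hLn : L.eval (n:ℚ) = ∑ k ∈ range n, ((2*k+1:ℕ):ℚ)^p := by
      rw [hL]
      simp only [Polynomial.eval_sub, Polynomial.eval_comp, Polynomial.eval_mul,
        Polynomial.eval_C, Polynomial.eval_X]
      have h2n : (2:ℚ) * (n:ℚ) = ((2*n : ℕ) : ℚ) := by push_cast; ring
      rw [h2n, Gp_eval p (2*n), Gp_eval p n, sum_split p n]
      have : ∑ k ∈ range n, ((2*k:ℕ):ℚ)^p = (2:ℚ)^p * ∑ k ∈ range n, (k:ℚ)^p := by
        rw [Finset.mul_sum]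
        apply Finset.sum_congr rfl
        intro k _
        push_cast
        rw [mul_pow]
      rw [this]
      ring
    have hRn : R.eval (n:ℚ) = ∑ k ∈ range n, ((2*k+1:ℕ):ℚ)^p := by
      rw [hR, Polynomial.eval_finset_sum]
      simp only [Polynomial.eval_mul, Polynomial.eval_C]
      have : ∀ j ∈ range (p+1), (p.choose j : ℚ) * 2^j * (Gp j).eval (n:ℚ)
          = ∑ k ∈ range n, (p.choose j : ℚ) * ((2:ℚ)*(k:ℚ))^j := by
        intro j _
        rw [Gp_eval j n, Finset.mul_sum]
        apply Finset.sum_congr rfl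
        intro k _
        rw [mul_pow]
        ring
      rw [Finset.sum_congr rfl this, Finset.sum_comm]
      apply Finset.sum_congr rfl
      intro k _
      have hb := add_pow (2*(k:ℚ)) 1 p
      simp only [one_pow, mul_one] at hb
      have : ((2*k+1:ℕ):ℚ) = 2*(k:ℚ)+1 := by push_cast; ring
      rw [this, hb]
      apply Finset.sum_congr rfl
      intro j _
      ring
    rw [hLn, hRn]
  have hLR : L = R := by
    apply Polynomial.eq_of_infinite_eval_eq
    apply Set.Infinite.mono (s := Set.range (Nat.cast : ℕ → ℚ))
    · rintro x ⟨n, rfl⟩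
      exact heval n
    · exact Set.infinite_range_of_injective Nat.cast_injective
  have hc := congrArg (fun q : Polynomial ℚ => q.coeff 1) hLR
  simp only [hL, hR, Polynomial.coeff_sub, Polynomial.coeff_C_mul, coeff_one_comp,
    Polynomial.finset_sum_coeff, coeff_one_Gp] at hc
  rw [← hc]
  ring
def eulerNum (n : ℕ) : ℚ :=
  2 * (1 - 2 ^ (n + 1)) * bernoulli (n + 1) / ((n : ℚ) + 1)

open Finset in
lemma euler_rec (m : ℕ) :
    ∑ k ∈ range (m+1), (m.choose k : ℚ) * eulerNum k = (if m = 0 then 2 else 0) - eulerNum m := by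
  have hm1 : ((m:ℚ)+1) ≠ 0 := by positivity
  have hterm : ∀ k ∈ range (m+1), (m.choose k : ℚ) * eulerNum k
      = (2/((m:ℚ)+1)) * (((m+1).choose (k+1) : ℚ) * ((1 - 2^(k+1)) * bernoulli (k+1))) := by
    intro k _
    rw [eulerNum]
    have hq : ((m:ℚ)+1) * (m.choose k : ℚ) = ((m+1).choose (k+1) : ℚ) * ((k:ℚ)+1) := by
      exact_mod_cast congrArg (Nat.cast : ℕ → ℚ) (Nat.add_one_mul_choose_eq m k)
    have hk1 : ((k:ℚ)+1) ≠ 0 := by positivity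
    field_simp
    linear_combination ((1 - 2^(k+1)) * bernoulli (k+1)) * hq
  rw [Finset.sum_congr rfl hterm, ← Finset.mul_sum]
  have hre : ∑ k ∈ range (m+1), (((m+1).choose (k+1):ℚ) * ((1-2^(k+1)) * bernoulli (k+1)))
      = ∑ j ∈ range (m+2), (((m+1).choose j : ℚ) * ((1-2^j) * bernoulli j)) := by
    rw [Finset.sum_range_succ' (fun j => ((m+1).choose j : ℚ) * ((1-2^j)*bernoulli j)) (m+1)]
    norm_num
  rw [hre]
  have hsplit : ∑ j ∈ range (m+2), (((m+1).choose j : ℚ) * ((1-2^j) * bernoulli j))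
      = ∑ j ∈ range (m+2), ((m+1).choose j : ℚ) * bernoulli j
        - ∑ j ∈ range (m+2), ((m+1).choose j : ℚ) * 2^j * bernoulli j := by
    rw [← Finset.sum_sub_distrib]; apply Finset.sum_congr rfl; intros; ring
  have h1 : ∑ j ∈ range (m+2), ((m+1).choose j : ℚ) * bernoulli j
      = (if m = 0 then 1 else 0) + bernoulli (m+1) := by
    rw [Finset.sum_range_succ, sum_bernoulli (m+1), Nat.choose_self]
    by_cases h : m = 0
    · subst h; norm_num
    · rw [if_neg (by omega), if_neg h]; push_cast; ring
  have h2 : ∑ j ∈ range (m+2), ((m+1).choose j : ℚ) * 2^j * bernoulli j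
      = (2 - 2^(m+1)) * bernoulli (m+1) := bernoulli_two_mul (m+1)
  rw [hsplit, h1, h2, eulerNum]
  by_cases h : m = 0
  · subst h; norm_num [bernoulli_one]
  · rw [if_neg h, if_neg h]
    field_simp
    ring

open Finset in
lemma eulerNum_eq_A : ∀ m, eulerNum m = A m := by
  intro m
  induction m using Nat.strong_induction_on with
  | _ m ih =>
    have hE := euler_rec m
    have hA := A_rec m
    rw [Finset.sum_range_succ, Nat.choose_self, Nat.cast_one, one_mul] at hE hA
    have hs : ∑ k ∈ range m, (m.choose k : ℚ) * eulerNum k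
        = ∑ k ∈ range m, (m.choose k : ℚ) * A k := by
      apply Finset.sum_congr rfl
      intro k hk
      rw [ih k (Finset.mem_range.mp hk)]
    rw [hs] at hE
    linarith [hE, hA]

open Finset in
lemma key (n : ℕ) :
    ∑ k ∈ range (n+1), eulerNum k * (S1 n k : ℚ) = (-1/2:ℚ)^n * (n.factorial : ℚ) := by
  have h1 : ∀ k ∈ range (n+1), eulerNum k * (S1 n k : ℚ)
      = ∑ i ∈ range (n+1), (-1/2:ℚ)^i * (i.factorial : ℚ) * ((S1 n k * S2 k i : ℤ) : ℚ) := by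
    intro k hk
    rw [eulerNum_eq_A, A, Finset.sum_mul]
    have hext : ∑ i ∈ range (k+1), (-1/2:ℚ)^i * (i.factorial:ℚ) * (S2 k i : ℚ) * (S1 n k : ℚ)
        = ∑ i ∈ range (n+1), (-1/2:ℚ)^i * (i.factorial:ℚ) * (S2 k i : ℚ) * (S1 n k : ℚ) := by
      apply Finset.sum_subset
      · intro x hx
        simp only [Finset.mem_range] at hx hk ⊢
        omega
      · intro x _ hx2
        simp only [Finset.mem_range] at hx2
        rw [S2_eq_zero_of_lt k x (by omega)]
        simp
    rw [hext]
    apply Finset.sum_congr rfl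
    intro i _
    push_cast
    ring
  rw [Finset.sum_congr rfl h1, Finset.sum_comm]
  have h2 : ∀ i ∈ range (n+1),
      ∑ k ∈ range (n+1), (-1/2:ℚ)^i * (i.factorial : ℚ) * ((S1 n k * S2 k i : ℤ) : ℚ)
      = (-1/2:ℚ)^i * (i.factorial : ℚ) * (if n = i then 1 else 0) := by
    intro i _
    rw [← Finset.mul_sum]
    congr 1
    have := orth n i
    have : ((∑ k ∈ range (n+1), S1 n k * S2 k i : ℤ) : ℚ) = ((if n = i then 1 else 0 : ℤ) : ℚ) := by
      exact_mod_cast congrArg (Int.cast : ℤ → ℚ) this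
    push_cast at this
    rw [← this]
    push_cast
    rfl
  rw [Finset.sum_congr rfl h2]
  rw [Finset.sum_eq_single n]
  · simp
  · intro b _ hb
    rw [if_neg (fun h => hb h.symm)]
    ring
  · intro h
    simp at h
noncomputable def ynum (n : ℕ) (l : ℝ) : ℝ :=
  ∑ j ∈ Finset.range (n + 1),
    (-1 : ℝ) ^ n / ((j + 1) * l ^ (j + 1) * (l - 1) ^ (n + 1 - j))

theorem stmt_17 (n : ℕ) (hn : 1 ≤ n) :
    ynum (n - 1) 2 + ynum n 2 =
      (1 / 2) * ∑ j ∈ Finset.range (n + 1),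
        (eulerNum j : ℝ) * (S1 n j : ℝ) / ((n + 1).factorial : ℝ) := by
  obtain ⟨m, rfl⟩ : ∃ m, n = m + 1 := ⟨n - 1, by omega⟩
  have hn1 : m + 1 - 1 = m := by omega
  rw [hn1]
  have hy : ∀ N : ℕ, ynum N 2 = ∑ j ∈ Finset.range (N+1), (-1:ℝ)^N / (((j:ℝ)+1) * 2^(j+1)) := by
    intro N
    rw [ynum]
    apply Finset.sum_congr rfl
    intro j _
    norm_num
  have hLHS : ynum m 2 + ynum (m+1) 2 = (-1:ℝ)^(m+1) / (((m:ℝ)+2) * 2^(m+2)) := by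
    have hc : ∀ j : ℕ, (-1:ℝ)^(m+1) / (((j:ℝ)+1) * 2^(j+1)) = -((-1:ℝ)^m / (((j:ℝ)+1) * 2^(j+1))) := by
      intro j; rw [pow_succ]; ring
    rw [hy m, hy (m+1),
      Finset.sum_range_succ (fun j => (-1:ℝ)^(m+1) / (((j:ℝ)+1) * 2^(j+1))) (m+1),
      Finset.sum_congr rfl (fun j _ => hc j), Finset.sum_neg_distrib]
    push_cast
    ring
  rw [hLHS]
  have hkR : ∑ j ∈ Finset.range (m+1+1), (eulerNum j : ℝ) * (S1 (m+1) j : ℝ)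
      = ((-1:ℝ)/2)^(m+1) * ((m+1).factorial : ℝ) := by
    have hc := congrArg (fun q : ℚ => (q : ℝ)) (key (m+1))
    push_cast at hc
    exact hc
  have hsum : ∑ j ∈ Finset.range (m+1+1), (eulerNum j : ℝ) * (S1 (m+1) j : ℝ) / (((m+1)+1).factorial : ℝ)
      = (∑ j ∈ Finset.range (m+1+1), (eulerNum j : ℝ) * (S1 (m+1) j : ℝ)) / (((m+1)+1).factorial : ℝ) := by
    rw [Finset.sum_div]
  rw [hsum, hkR]
  have hfac : (((m+1)+1).factorial : ℝ) = ((m:ℝ)+2) * ((m+1).factorial : ℝ) := by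
    rw [Nat.factorial_succ]
    push_cast
    ring
  rw [hfac]
  have h1 : ((m+1).factorial : ℝ) ≠ 0 := by positivity
  have h2 : ((m:ℝ)+2) ≠ 0 := by positivity
  rw [div_pow]
  field_simp
  ring
end

section
/- Let n be a nonnegative integer and let λ be a real number with λ ≠ 0 and λ ≠ 1. Viewing y(n,·) as a differentiable function of λ on ℝ \ {0,1}, one has (λ-1)·(d/dλ)y(n,λ) + (n+2)·y(n,λ) = (-1)^n · Σ_{k=0}^{n} (λ-1)^{k-n-1} / λ^{k+2}. -/
theorem stmt_18 (n : ℕ) (l : ℝ) (hl0 : l ≠ 0) (hl1 : l ≠ 1) :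
    (l - 1) * deriv (fun t : ℝ => ynum n t) l + ((n : ℝ) + 2) * ynum n l =
      (-1 : ℝ) ^ n * ∑ k ∈ Finset.range (n + 1),
        (l - 1) ^ ((k : ℤ) - (n : ℤ) - 1) / l ^ (k + 2) := by
  have hl1' : l - 1 ≠ 0 := sub_ne_zero.mpr hl1
  set c : ℝ := (-1 : ℝ) ^ n with hc
  have hf : ∀ j ∈ Finset.range (n + 1),
      HasDerivAt (fun t : ℝ => c / ((j + 1) * t ^ (j + 1) * (t - 1) ^ (n + 1 - j)))
        ((0 * (((j:ℝ) + 1) * l ^ (j + 1) * (l - 1) ^ (n + 1 - j)) -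
            c * ((((j:ℝ) + 1) * (((j:ℕ) + 1 : ℕ) * l ^ j)) * (l - 1) ^ (n + 1 - j) +
              (((j:ℝ) + 1) * l ^ (j + 1)) *
                (((n + 1 - j : ℕ) : ℝ) * (l - 1) ^ (n + 1 - j - 1)))) /
          (((j:ℝ) + 1) * l ^ (j + 1) * (l - 1) ^ (n + 1 - j)) ^ 2) l := by
    intro j hj
    have hje : j ≤ n := by simpa [Nat.lt_succ_iff] using hj
    have h1 : HasDerivAt (fun t : ℝ => t ^ (j + 1)) (((j:ℕ) + 1 : ℕ) * l ^ j) l :=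
      hasDerivAt_pow (j + 1) l
    have h2 : HasDerivAt (fun t : ℝ => (t - 1) ^ (n + 1 - j))
        (((n + 1 - j : ℕ) : ℝ) * (l - 1) ^ (n + 1 - j - 1) * 1) l :=
      ((hasDerivAt_id l).sub_const 1).pow (n + 1 - j)
    have hg : HasDerivAt (fun t : ℝ => ((j:ℝ) + 1) * t ^ (j + 1) * (t - 1) ^ (n + 1 - j))
        ((((j:ℝ) + 1) * (((j:ℕ) + 1 : ℕ) * l ^ j)) * (l - 1) ^ (n + 1 - j) +
          (((j:ℝ) + 1) * l ^ (j + 1)) * (((n + 1 - j : ℕ) : ℝ) * (l - 1) ^ (n + 1 - j - 1))) l := by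
      have := (h1.const_mul ((j:ℝ) + 1)).fun_mul h2
      simpa [mul_assoc, mul_comm, mul_left_comm] using this
    have hgne : ((j:ℝ) + 1) * l ^ (j + 1) * (l - 1) ^ (n + 1 - j) ≠ 0 := by
      positivity
    exact (hasDerivAt_const l c).div hg hgne
  have hderiv : HasDerivAt (fun t : ℝ => ynum n t)
      (∑ j ∈ Finset.range (n + 1),
        (0 * (((j:ℝ) + 1) * l ^ (j + 1) * (l - 1) ^ (n + 1 - j)) -
            c * ((((j:ℝ) + 1) * (((j:ℕ) + 1 : ℕ) * l ^ j)) * (l - 1) ^ (n + 1 - j) +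
              (((j:ℝ) + 1) * l ^ (j + 1)) *
                (((n + 1 - j : ℕ) : ℝ) * (l - 1) ^ (n + 1 - j - 1)))) /
          (((j:ℝ) + 1) * l ^ (j + 1) * (l - 1) ^ (n + 1 - j)) ^ 2) l := by
    simpa [ynum] using HasDerivAt.fun_sum hf
  rw [hderiv.deriv, ynum, Finset.mul_sum, Finset.mul_sum, Finset.mul_sum,
    ← Finset.sum_add_distrib]
  refine Finset.sum_congr rfl fun j hj => ?_
  have hje : j ≤ n := by simpa [Nat.lt_succ_iff] using hj
  obtain ⟨m, hm⟩ : ∃ m, n = j + m := ⟨n - j, by omega⟩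
  subst hm
  have e1 : j + m + 1 - j = m + 1 := by omega
  have e2 : m + 1 - 1 = m := by omega
  rw [e1, e2]
  have ez : ((j:ℤ) - (j + m : ℕ) - 1) = -((m + 1 : ℕ) : ℤ) := by push_cast; ring
  rw [ez, zpow_neg, zpow_natCast]
  have hj1 : ((j:ℝ) + 1) ≠ 0 := by positivity
  field_simp
  simp only [hc]
  push_cast
  ring
end

section
/- For every integer n ≥ 1, Σ_{j=0}^{n-1} 1/C(n-1,j) = (2n/(n+1)) · Σ_{j=0}^{n-1} 1/C(n,j). -/
theorem stmt_19 (n : ℕ) (hn : 1 ≤ n) :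
    ∑ j ∈ Finset.range n, (1 : ℝ) / ((n - 1).choose j : ℝ) =
      (2 * (n : ℝ) / ((n : ℝ) + 1)) * ∑ j ∈ Finset.range n, (1 : ℝ) / (n.choose j : ℝ) := by
  obtain ⟨m, rfl⟩ : ∃ m, n = m + 1 := ⟨n - 1, (Nat.succ_pred_eq_of_pos hn).symm⟩
  simp only [Nat.add_sub_cancel]
  have key : ∀ j ∈ Finset.range (m+1),
      (1 : ℝ) / (m.choose j) =
        ((m:ℝ)+1)/((m:ℝ)+2) * ((1:ℝ)/((m+1).choose j) + 1/((m+1).choose (j+1))) := by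
    intro j hj
    rw [Finset.mem_range, Nat.lt_succ_iff] at hj
    have hb : ((m+1).choose j : ℝ) * ((m:ℝ) + 1 - j) = (m.choose j : ℝ) * ((m:ℝ)+1) := by
      have h1 : ((m.choose j * (m+1) : ℕ) : ℝ) = (((m+1).choose j * (m + 1 - j) : ℕ) : ℝ) := by
        exact_mod_cast congrArg (fun k : ℕ => (k:ℝ)) (Nat.choose_mul_succ_eq m j)
      push_cast [Nat.le_succ_of_le hj] at h1
      linarith
    have hc : ((m+1).choose (j+1) : ℝ) * ((j:ℝ) + 1) = (m.choose j : ℝ) * ((m:ℝ)+1) := by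
      have h1 : (((m+1) * m.choose j : ℕ) : ℝ) = (((m+1).choose (j+1) * (j+1) : ℕ) : ℝ) := by
        exact_mod_cast congrArg (fun k : ℕ => (k:ℝ)) (Nat.add_one_mul_choose_eq m j)
      push_cast at h1
      linarith
    have ha : (0:ℝ) < (m.choose j : ℝ) := by
      exact_mod_cast Nat.choose_pos hj
    have hb0 : (0:ℝ) < ((m+1).choose j : ℝ) := by
      exact_mod_cast Nat.choose_pos (Nat.le_succ_of_le hj)
    have hc0 : (0:ℝ) < ((m+1).choose (j+1) : ℝ) := by
      exact_mod_cast Nat.choose_pos (Nat.succ_le_succ hj)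
    field_simp
    nlinarith [hb, hc, ha, hb0, hc0]
  rw [Finset.sum_congr rfl key, ← Finset.mul_sum, Finset.sum_add_distrib]
  have shift : ∑ j ∈ Finset.range (m+1), (1:ℝ)/((m+1).choose (j+1)) =
      ∑ j ∈ Finset.range (m+1), (1:ℝ)/((m+1).choose j) := by
    have h1 := Finset.sum_range_succ' (fun j => (1:ℝ)/((m+1).choose j)) (m+1)
    have h2 := Finset.sum_range_succ (fun j => (1:ℝ)/((m+1).choose j)) (m+1)
    simp only [one_div] at h1 h2 ⊢
    simp [Nat.choose_self] at h1 h2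
    linarith
  rw [shift]
  push_cast
  ring
end
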